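/- arXiv:1209.1728 — 2 statements merged into one kernel-verified Lean document; each statement's English description precedes it below -/
import Mathlib

section
/- Let M ⊂ B(H) be a von Neumann algebra with a cyclic separating vector, J its modular conjugation, and K(H) the compact operators. Suppose θ: A ⊗ JAJ → B(H) is a u.c.p. map on the minimal tensor product of a C*-subalgebra A ⊂ M with JAJ, such that θ(a⊗JbJ) − aJbJ is compact for all a,b ∈ A. If (p_j) is a net of finite-rank projections on H converging strongly to 1, then for every element S of the algebraic tensor product A ⊙ JAJ, limsup_j ‖ν(S)(1−p_j)‖ ≤ ‖Θ(S)‖, where ν(a⊗JbJ) = aJbJ is the multiplication map and Θ is the extension of θ. -/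
open Filter Metric ContinuousLinearMap in
/-- If `C` is compact and `Q j → 0` strongly with `‖Q j‖ ≤ 1`, then `‖Q j ∘ C‖ → 0`. -/
lemma aux_left_mul_compact {H : Type*} [NormedAddCommGroup H] [InnerProductSpace ℂ H]
    [CompleteSpace H] {ι : Type*} {l : Filter ι} (C : H →L[ℂ] H)
    (hC : IsCompactOperator ⇑(C : H →ₗ[ℂ] H))
    (Q : ι → (H →L[ℂ] H)) (hQn : ∀ j, ‖Q j‖ ≤ 1)
    (hQ0 : ∀ ξ : H, Tendsto (fun j => Q j ξ) l (nhds 0)) :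
    Tendsto (fun j => ‖(Q j).comp C‖) l (nhds 0) := by
  rw [Metric.tendsto_nhds]
  intro ε hε
  obtain ⟨K, hK, hCK⟩ := hC.image_closedBall_subset_compact 1
  obtain ⟨t, htf, hcov⟩ := (Metric.totallyBounded_iff).1 hK.totallyBounded (ε/4) (by linarith)
  have hev : ∀ᶠ j in l, ∀ y ∈ t, ‖Q j y‖ < ε/4 := by
    rw [eventually_all_finite htf]
    intro y _
    have := (hQ0 y).norm
    simp only [norm_zero] at this
    exact this.eventually_lt_const (by linarith)
  filter_upwards [hev] with j hj
  rw [Real.dist_eq, sub_zero, abs_of_nonneg (norm_nonneg _)]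
  have hb : ‖(Q j).comp C‖ ≤ ε/2 := by
    refine ContinuousLinearMap.opNorm_le_bound _ (by linarith) fun x => ?_
    rcases eq_or_ne x 0 with rfl | hx
    · simp
    · set u : H := ((‖x‖ : ℂ))⁻¹ • x with hu
      have hxne : (‖x‖ : ℂ) ≠ 0 := by
        simpa using norm_ne_zero_iff.2 hx
      have hun : ‖u‖ = 1 := by
        rw [hu, norm_smul, norm_inv]
        simp only [Complex.norm_real, norm_norm]
        exact inv_mul_cancel₀ (norm_ne_zero_iff.2 hx)
      have hmem : C u ∈ K := hCK ⟨u, by simp [Metric.mem_closedBall, hun], rfl⟩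
      obtain ⟨y, hyt, hy⟩ : ∃ y ∈ t, C u ∈ Metric.ball y (ε/4) := by
        simpa using hcov hmem
      have h1 : ‖C u - y‖ < ε/4 := by
        rw [← dist_eq_norm]; exact hy
      have h2 : ‖Q j (C u)‖ ≤ ε/2 := by
        have : Q j (C u) = Q j (C u - y) + Q j y := by
          rw [← map_add, sub_add_cancel]
        rw [this]
        have := (Q j).le_opNorm (C u - y)
        calc ‖Q j (C u - y) + Q j y‖ ≤ ‖Q j (C u - y)‖ + ‖Q j y‖ := norm_add_le _ _
          _ ≤ ‖Q j‖ * ‖C u - y‖ + ‖Q j y‖ := by gcongr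
          _ ≤ 1 * (ε/4) + (ε/4) :=
              add_le_add (mul_le_mul (hQn j) h1.le (norm_nonneg _) zero_le_one) (hj y hyt).le
          _ = ε/2 := by ring
      have hx' : x = (‖x‖ : ℂ) • u := by
        rw [hu, smul_smul, mul_inv_cancel₀ hxne, one_smul]
      calc ‖(Q j).comp C x‖ = ‖Q j (C x)‖ := rfl
        _ = ‖x‖ * ‖Q j (C u)‖ := by
            conv_lhs => rw [hx']
            rw [map_smul, map_smul, norm_smul]
            simp
        _ ≤ ‖x‖ * (ε/2) := by gcongr
        _ = ε/2 * ‖x‖ := by ring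
  linarith

open ContinuousLinearMap in
/-- Schauder's theorem in Hilbert space: the adjoint of a compact operator is compact. -/
lemma aux_adjoint_compact {H : Type*} [NormedAddCommGroup H] [InnerProductSpace ℂ H]
    [CompleteSpace H] (C : H →L[ℂ] H) (hC : IsCompactOperator ⇑(C : H →ₗ[ℂ] H)) :
    IsCompactOperator ⇑((star C : H →L[ℂ] H) : H →ₗ[ℂ] H) := by
  set D : H →L[ℂ] H := C * star C with hD
  have hDc : IsCompactOperator ⇑((D : H →L[ℂ] H) : H →ₗ[ℂ] H) := by
    have := hC.comp_clm (star C : H →L[ℂ] H)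
    exact this
  rw [isCompactOperator_iff_isCompact_closure_image_closedBall (𝕜₁ := ℂ)
    ((star C : H →L[ℂ] H) : H →ₗ[ℂ] H) one_pos]
  have htb : TotallyBounded ((star C : H →L[ℂ] H) '' Metric.closedBall 0 1) := by
    rw [Metric.totallyBounded_iff]
    intro ε hε
    obtain ⟨K, hK, hDK⟩ := hDc.image_closedBall_subset_compact 1
    have hDtb : TotallyBounded ((D : H →L[ℂ] H) '' Metric.closedBall 0 1) :=
      hK.totallyBounded.subset hDK
    obtain ⟨t, hts, htf, hcov⟩ := totallyBounded_iff_subset.1 hDtb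
      {p : H × H | dist p.1 p.2 < ε^2/4} (Metric.dist_mem_uniformity (by positivity))
    -- for each y ∈ t choose a preimage in the ball
    have hch : ∀ y ∈ t, ∃ x ∈ Metric.closedBall (0:H) 1, D x = y := fun y hy => by
      obtain ⟨x, hx, hxy⟩ := hts hy; exact ⟨x, hx, hxy⟩
    classical
    choose! g hg1 hg2 using hch
    refine ⟨(fun y => (star C : H →L[ℂ] H) (g y)) '' t, htf.image _, ?_⟩
    rintro _ ⟨x, hx, rfl⟩
    obtain ⟨y, hyt, hy⟩ : ∃ y ∈ t, dist (D x) y < ε^2/4 := by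
      have : D x ∈ ⋃ y ∈ t, {z | (z, y) ∈ {p : H × H | dist p.1 p.2 < ε^2/4}} :=
        hcov ⟨x, hx, rfl⟩
      simpa using this
    refine Set.mem_biUnion (Set.mem_image_of_mem _ hyt) ?_
    rw [Metric.mem_ball, dist_eq_norm]
    set u : H := x - g y with hu
    have hDu : ‖D u‖ < ε^2/4 := by
      have : D u = D x - y := by rw [hu, map_sub, hg2 y hyt]
      rw [this, ← dist_eq_norm]; exact hy
    have hun : ‖u‖ ≤ 2 := by
      have h1 : ‖x‖ ≤ 1 := by simpa using hx
      have h2 : ‖g y‖ ≤ 1 := by simpa using hg1 y hyt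
      calc ‖u‖ ≤ ‖x‖ + ‖g y‖ := norm_sub_le _ _
        _ ≤ 2 := by linarith
    have hsq : ‖(star C : H →L[ℂ] H) u‖^2 < ε^2 := by
      have hinner : ((inner ℂ ((star C : H →L[ℂ] H) u) ((star C : H →L[ℂ] H) u)) : ℂ)
          = inner ℂ u (D u) := by
        rw [star_eq_adjoint]
        rw [ContinuousLinearMap.adjoint_inner_left]
        rfl
      have h1 : ‖(star C : H →L[ℂ] H) u‖^2 = RCLike.re ((inner ℂ u (D u) : ℂ)) := by
        rw [← hinner, inner_self_eq_norm_sq]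
      have h2 : RCLike.re ((inner ℂ u (D u) : ℂ)) ≤ ‖u‖ * ‖D u‖ := by
        calc RCLike.re ((inner ℂ u (D u) : ℂ)) ≤ ‖(inner ℂ u (D u) : ℂ)‖ := RCLike.re_le_norm _
          _ ≤ ‖u‖ * ‖D u‖ := norm_inner_le_norm _ _
      nlinarith [norm_nonneg (D u), norm_nonneg u]
    rw [← map_sub]
    exact lt_of_pow_lt_pow_left₀ 2 hε.le hsq
  have : ((star C : H →L[ℂ] H) : H →ₗ[ℂ] H) '' Metric.closedBall 0 1
      = (star C : H →L[ℂ] H) '' Metric.closedBall 0 1 := rfl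
  rw [this]
  exact htb.closure.isCompact_of_isClosed isClosed_closure

lemma aux_sum_compact {H : Type*} [NormedAddCommGroup H] [InnerProductSpace ℂ H]
    {n : ℕ} (s : Finset (Fin n)) (f : Fin n → (H →L[ℂ] H))
    (hf : ∀ i, IsCompactOperator ⇑(f i)) :
    IsCompactOperator ⇑(∑ i ∈ s, f i) := by
  classical
  induction s using Finset.induction_on with
  | empty => simpa using isCompactOperator_zero
  | @insert i s hx ih =>
      rw [Finset.sum_insert hx]
      exact (hf i).add ih


/-- A projection in a ∗-ring: a self-adjoint idempotent. -/
def IsProjection {A : Type*} [Ring A] [StarRing A] (p : A) : Prop :=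
  IsSelfAdjoint p ∧ IsIdempotentElem p

/-- let `M ⊂ B(H)` be a von Neumann algebra in standard form with modular
conjugation `J` (an antiunitary involution with `JMJ = M'`), and `A ⊂ M` a σ-weakly
dense unital C*-subalgebra.  Suppose `θ` is a u.c.p. map on `A ⊗_min JAJ` such that
`θ(a ⊗ JbJ) − a·JbJ` is compact for all `a, b ∈ A`; we record its values
`θS i = θ(aᵢ ⊗ J bᵢ J)` on the legs of an element `S = ∑ aᵢ ⊗ J bᵢ J` of the algebraic
tensor product `A ⊙ JAJ`.  If `(P j)` is a net of finite-rank projections converging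
strongly to `1`, then `limsup_j ‖ν(S)(1 − P j)‖ ≤ ‖Θ(S)‖`, where
`ν(S) = ∑ aᵢ · J bᵢ J` and `Θ(S) = ∑ θS i`. -/
theorem stmt3 {H : Type*} [NormedAddCommGroup H] [InnerProductSpace ℂ H] [CompleteSpace H]
    (M : VonNeumannAlgebra H)
    -- the modular conjugation J: an antiunitary involution with J M J = M'
    (J : H → H)
    (Jadd : ∀ ξ η, J (ξ + η) = J ξ + J η)
    (Jsmul : ∀ (c : ℂ) ξ, J (c • ξ) = (starRingEnd ℂ) c • J ξ)
    (Jinv : ∀ ξ, J (J ξ) = ξ)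
    (Jinner : ∀ ξ η, (inner ℂ (J ξ) (J η) : ℂ) = inner ℂ η ξ)
    (JMJ : ∀ x : H →L[ℂ] H, x ∈ M →
      ∀ y : H →L[ℂ] H, (∀ ξ, y ξ = J (x (J ξ))) → y ∈ Set.centralizer (M : Set (H →L[ℂ] H)))
    -- A ⊂ M a σ-weakly dense unital C*-subalgebra (σ-weak density ⟺ A'' = M)
    (A : StarSubalgebra ℂ (H →L[ℂ] H)) (hAM : (A : Set (H →L[ℂ] H)) ⊆ M)
    (hdense : Set.centralizer (Set.centralizer (A : Set (H →L[ℂ] H))) = M)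
    -- an element S = ∑ i, a i ⊗ (J (b i) J) of A ⊙ JAJ, with c i = J (b i) J
    (n : ℕ) (a b c : Fin n → (H →L[ℂ] H))
    (ha : ∀ i, a i ∈ A) (hb : ∀ i, b i ∈ A)
    (hc : ∀ i, ∀ ξ, (c i) ξ = J ((b i) (J ξ)))
    -- the values θS i = θ(a i ⊗ J (b i) J) of the u.c.p. map θ, with θ(a⊗JbJ) − aJbJ compact
    (θS : Fin n → (H →L[ℂ] H))
    (hθcompact : ∀ i, IsCompactOperator ((θS i - a i * c i) : H →L[ℂ] H))
    -- a net of finite-rank projections converging strongly to 1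
    {ι : Type*} (l : Filter ι) [l.NeBot] (P : ι → (H →L[ℂ] H))
    (hPproj : ∀ j, IsProjection (P j))
    (hPfin : ∀ j, FiniteDimensional ℂ (LinearMap.range ((P j) : H →ₗ[ℂ] H)))
    (hPto1 : ∀ ξ : H, Filter.Tendsto (fun j => (P j) ξ) l (nhds ξ)) :
    Filter.limsup (fun j => ‖(∑ i, a i * c i) * (1 - P j)‖) l ≤ ‖∑ i, θS i‖ := by
  classical
  set N : H →L[ℂ] H := ∑ i, a i * c i with hN
  set T : H →L[ℂ] H := ∑ i, θS i with hT
  have hKc : IsCompactOperator ⇑((T - N : H →L[ℂ] H) : H →ₗ[ℂ] H) := by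
    have hsum : T - N = ∑ i, (θS i - a i * c i) := by
      rw [hT, hN, Finset.sum_sub_distrib]
    rw [hsum]
    exact aux_sum_compact _ _ hθcompact
  have hKcs : IsCompactOperator ⇑((star (T - N) : H →L[ℂ] H) : H →ₗ[ℂ] H) :=
    aux_adjoint_compact _ hKc
  have hQsa : ∀ j, star ((1 : H →L[ℂ] H) - P j) = (1 : H →L[ℂ] H) - P j := fun j => by
    rw [star_sub, star_one, (hPproj j).1.star_eq]
  have hQid : ∀ j, ((1 : H →L[ℂ] H) - P j) * ((1 : H →L[ℂ] H) - P j)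
      = (1 : H →L[ℂ] H) - P j := fun j => (hPproj j).2.one_sub
  have hQn : ∀ j, ‖(1 : H →L[ℂ] H) - P j‖ ≤ 1 := by
    intro j
    have h := CStarRing.norm_star_mul_self (x := (1 : H →L[ℂ] H) - P j)
    rw [hQsa j, hQid j] at h
    nlinarith [norm_nonneg ((1 : H →L[ℂ] H) - P j)]
  have hQ0 : ∀ ξ : H, Filter.Tendsto (fun j => ((1 : H →L[ℂ] H) - P j) ξ) l (nhds 0) := by
    intro ξ
    have h : (fun j => ((1 : H →L[ℂ] H) - P j) ξ) = fun j => ξ - P j ξ := by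
      funext j
      simp [ContinuousLinearMap.sub_apply]
    rw [h]
    have := (hPto1 ξ).const_sub ξ
    simpa using this
  have hL := aux_left_mul_compact _ hKcs (fun j => (1 : H →L[ℂ] H) - P j) hQn hQ0
  refine le_of_forall_pos_le_add fun ε hε => ?_
  have hev : ∀ᶠ j in l, ‖N * ((1 : H →L[ℂ] H) - P j)‖ ≤ ‖T‖ + ε := by
    filter_upwards [hL.eventually_lt_const hε] with j hj
    have hdecomp : N * ((1 : H →L[ℂ] H) - P j)
        = T * ((1 : H →L[ℂ] H) - P j) - (T - N) * ((1 : H →L[ℂ] H) - P j) := by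
      rw [sub_mul, sub_sub_cancel]
    have hstar : ‖(T - N) * ((1 : H →L[ℂ] H) - P j)‖
        = ‖(((1 : H →L[ℂ] H) - P j)).comp (star (T - N))‖ := by
      rw [← norm_star, star_mul, hQsa j]
      rfl
    calc ‖N * ((1 : H →L[ℂ] H) - P j)‖
        ≤ ‖T * ((1 : H →L[ℂ] H) - P j)‖ + ‖(T - N) * ((1 : H →L[ℂ] H) - P j)‖ := by
          rw [hdecomp]; exact norm_sub_le _ _
      _ ≤ ‖T‖ * ‖(1 : H →L[ℂ] H) - P j‖ + ‖(T - N) * ((1 : H →L[ℂ] H) - P j)‖ := by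
          exact add_le_add_left (norm_mul_le _ _) _
      _ ≤ ‖T‖ * 1 + ε := by
          rw [hstar]
          exact add_le_add (mul_le_mul_of_nonneg_left (hQn j) (norm_nonneg T)) hj.le
      _ = ‖T‖ + ε := by ring
  exact Filter.limsup_le_of_le (Filter.isCoboundedUnder_le_of_le l fun j => norm_nonneg _) hev
end

section
/- Let ψ: B(H)⊗B(K) → B(H) be a u.c.p. map such that ψ(x⊗y) − xy is compact for all x in a C*-algebra A ⊂ B(H) and all y in a C*-algebra B ⊂ B(H) commuting with A (here x⊗y denotes the element of the minimal tensor product A⊗B). Then the map a⊗b ↦ ab + K(H) from A⊙B to the Calkin algebra B(H)/K(H) extends to a bounded (indeed u.c.p.) map on the minimal tensor product A⊗B. -/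
noncomputable section
set_option synthInstance.maxHeartbeats 1000000

instance {E : Type*} [NormedAddCommGroup E] [InnerProductSpace ℂ E] [CompleteSpace E]
    {n : ℕ} : CompleteSpace (PiLp 2 fun _ : Fin n => E) :=
  inferInstance

/-- The operator on `ℓ²(Fin n, E)` induced by an `n × n` matrix of operators on `E`. -/
def matOp {E : Type*} [NormedAddCommGroup E] [InnerProductSpace ℂ E]
    {n : ℕ} (x : Matrix (Fin n) (Fin n) (E →L[ℂ] E)) :
    (PiLp 2 fun _ : Fin n => E) →L[ℂ] PiLp 2 fun _ : Fin n => E :=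
  (((PiLp.continuousLinearEquiv 2 ℂ (fun _ : Fin n => E)).symm :
      (∀ _ : Fin n, E) →L[ℂ] PiLp 2 fun _ : Fin n => E).comp
    (ContinuousLinearMap.pi fun i => ∑ j, (x i j).comp (ContinuousLinearMap.proj j))).comp
    ((PiLp.continuousLinearEquiv 2 ℂ (fun _ : Fin n => E)) :
      (PiLp 2 fun _ : Fin n => E) →L[ℂ] ∀ _ : Fin n, E)

lemma matOp_apply {E : Type*} [NormedAddCommGroup E] [InnerProductSpace ℂ E]
    {n : ℕ} (x : Matrix (Fin n) (Fin n) (E →L[ℂ] E)) (v : PiLp 2 fun _ : Fin n => E)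
    (i : Fin n) : matOp x v i = ∑ j, x i j (v j) := by
  simp [matOp, ContinuousLinearMap.sum_apply]

set_option maxHeartbeats 1000000 in
/-- A unital map that is 2-positive (in the `matOp` sense) is contractive. -/
lemma ucp_contractive {H L : Type*}
    [NormedAddCommGroup H] [InnerProductSpace ℂ H] [CompleteSpace H]
    [NormedAddCommGroup L] [InnerProductSpace ℂ L] [CompleteSpace L]
    (ψ : (L →L[ℂ] L) →ₗ[ℂ] (H →L[ℂ] H)) (hψ1 : ψ 1 = 1)
    (hψcp : ∀ (n : ℕ) (x : Matrix (Fin n) (Fin n) (L →L[ℂ] L)),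
      (matOp x).IsPositive → (matOp (x.map ψ)).IsPositive)
    (x : L →L[ℂ] L) : ‖ψ x‖ ≤ ‖x‖ := by
  rcases eq_or_ne x 0 with rfl | hx
  · simp
  set c : ℝ := ‖x‖ with hc
  have hcpos : 0 < c := norm_pos_iff.mpr hx
  set m : Matrix (Fin 2) (Fin 2) (L →L[ℂ] L) :=
    ![![(c : ℂ) • 1, x], ![ContinuousLinearMap.adjoint x, (c : ℂ) • 1]] with hm
  have hmpos : (matOp m).IsPositive := by
    constructor
    · intro v w
      simp only [ContinuousLinearMap.coe_coe, PiLp.inner_apply, Fin.sum_univ_two, matOp_apply]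
      simp only [ContinuousLinearMap.coe_coe, PiLp.inner_apply, Fin.sum_univ_two,
        matOp_apply, hm, Matrix.cons_val_zero, Matrix.cons_val_one, Matrix.head_cons,
        ContinuousLinearMap.add_apply, ContinuousLinearMap.smul_apply,
        ContinuousLinearMap.one_apply, inner_add_left, inner_add_right,
        inner_smul_left, inner_smul_right, ContinuousLinearMap.adjoint_inner_left,
        ContinuousLinearMap.adjoint_inner_right, Complex.conj_ofReal]
      ring
    · intro v
      have h0 : matOp m v 0 = (c : ℂ) • v 0 + x (v 1) := by
        rw [matOp_apply]
        simp [matOp_apply, hm, Fin.sum_univ_two]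
      have h1 : matOp m v 1 = ContinuousLinearMap.adjoint x (v 0) + (c : ℂ) • v 1 := by
        rw [matOp_apply]
        simp [matOp_apply, hm, Fin.sum_univ_two]
      rw [ContinuousLinearMap.reApplyInnerSelf, PiLp.inner_apply, Fin.sum_univ_two, h0, h1]
      rw [inner_add_left, inner_add_left, ContinuousLinearMap.adjoint_inner_left,
        inner_smul_left, inner_smul_left, Complex.conj_ofReal,
        inner_self_eq_norm_sq_to_K, inner_self_eq_norm_sq_to_K,
        ← inner_conj_symm (v 0) (x (v 1))]
      set z := (inner ℂ (x (v 1)) (v 0) : ℂ) with hz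
      have hzb : -Complex.re z ≤ c * (‖v 1‖ * ‖v 0‖) := by
        calc -Complex.re z ≤ |Complex.re z| := neg_le_abs _
          _ ≤ ‖z‖ := Complex.abs_re_le_norm z
          _ ≤ ‖x (v 1)‖ * ‖v 0‖ := norm_inner_le_norm _ _
          _ ≤ c * (‖v 1‖ * ‖v 0‖) := by
              have := x.le_opNorm (v 1)
              nlinarith [norm_nonneg (v 0)]
      simp only [RCLike.re_to_complex, map_add, Complex.add_re, Complex.conj_re,
        ← Complex.ofReal_pow, Complex.re_ofReal_mul, Complex.ofReal_re]
      norm_cast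
      simp only [Complex.coe_algebraMap, Complex.ofReal_re]
      nlinarith [mul_nonneg hcpos.le (sq_nonneg (‖v 0‖ - ‖v 1‖))]
  have hpos2 := hψcp 2 m hmpos
  set T := matOp (m.map ψ) with hT
  have hsym := hpos2.1
  have hmap00 : (m.map ψ) 0 0 = (c : ℂ) • 1 := by
    rw [Matrix.map_apply]
    simp [hm, Matrix.map_apply, map_smul, hψ1]
  have hmap01 : (m.map ψ) 0 1 = ψ x := by rw [Matrix.map_apply]; simp [hm, Matrix.map_apply]
  have hmap11 : (m.map ψ) 1 1 = (c : ℂ) • 1 := by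
    rw [Matrix.map_apply]
    simp [hm, Matrix.map_apply, map_smul, hψ1]
  have hTapp : ∀ v : PiLp 2 fun _ : Fin 2 => H,
      T v 0 = (c : ℂ) • v 0 + ψ x (v 1) ∧
      T v 1 = ψ (ContinuousLinearMap.adjoint x) (v 0) + (c : ℂ) • v 1 := by
    intro v
    constructor
    · rw [hT, matOp_apply, Fin.sum_univ_two, hmap00, hmap01]; simp
    · rw [hT, matOp_apply, Fin.sum_univ_two, hmap11, Matrix.map_apply]
      simp [hm, Matrix.map_apply]
  have hkey : ∀ ξ η : H, (inner ℂ (ψ (ContinuousLinearMap.adjoint x) ξ) η : ℂ)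
      = (inner ℂ ξ (ψ x η) : ℂ) := by
    intro ξ η
    have := hsym ((WithLp.equiv 2 (∀ _ : Fin 2, H)).symm ![ξ, 0])
      ((WithLp.equiv 2 (∀ _ : Fin 2, H)).symm ![0, η])
    simp only [ContinuousLinearMap.coe_coe, PiLp.inner_apply, Fin.sum_univ_two] at this
    rcases hTapp ((WithLp.equiv 2 (∀ _ : Fin 2, H)).symm ![ξ, 0]) with ⟨ha0, ha1⟩
    rcases hTapp ((WithLp.equiv 2 (∀ _ : Fin 2, H)).symm ![0, η]) with ⟨hb0, hb1⟩
    simp only [WithLp.equiv_symm_apply, PiLp.toLp_apply, Matrix.cons_val_zero, Matrix.cons_val_one,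
      Matrix.head_cons] at ha0 ha1 hb0 hb1 this
    rw [ha0, ha1, hb0, hb1] at this
    simpa [inner_smul_left, inner_smul_right] using this
  have hbound : ∀ η : H, ‖ψ x η‖ ≤ c * ‖η‖ := by
    intro η
    set y := ψ x η with hy
    set ξ : H := ((-(c⁻¹) : ℝ) : ℂ) • y with hξ
    have hpv := hpos2.2 ((WithLp.equiv 2 (∀ _ : Fin 2, H)).symm ![ξ, η])
    rw [ContinuousLinearMap.reApplyInnerSelf, PiLp.inner_apply, Fin.sum_univ_two] at hpv
    rcases hTapp ((WithLp.equiv 2 (∀ _ : Fin 2, H)).symm ![ξ, η]) with ⟨h0, h1⟩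
    simp only [WithLp.equiv_symm_apply, PiLp.toLp_apply, Matrix.cons_val_zero, Matrix.cons_val_one,
      Matrix.head_cons] at h0 h1 hpv
    rw [h0, h1] at hpv
    rw [inner_add_left, inner_add_left, hkey ξ η] at hpv
    have hξnorm : ‖ξ‖ = c⁻¹ * ‖y‖ := by
      rw [hξ, norm_smul, Complex.norm_real, Real.norm_eq_abs, abs_neg,
        abs_of_pos (inv_pos.mpr hcpos)]
    have e1 : (inner ℂ ((c:ℂ) • ξ) ξ : ℂ) = ((c * ‖ξ‖^2 : ℝ) : ℂ) := by
      rw [inner_smul_left, inner_self_eq_norm_sq_to_K, Complex.conj_ofReal]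
      push_cast [Complex.coe_algebraMap]; ring
    have e2 : (inner ℂ (ψ x η) ξ : ℂ) = (((-(c⁻¹)) * ‖y‖^2 : ℝ) : ℂ) := by
      rw [← hy, hξ, inner_smul_right, inner_self_eq_norm_sq_to_K]
      push_cast [Complex.coe_algebraMap]; ring
    have e3 : (inner ℂ ξ (ψ x η) : ℂ) = (((-(c⁻¹)) * ‖y‖^2 : ℝ) : ℂ) := by
      rw [← hy, hξ, inner_smul_left, inner_self_eq_norm_sq_to_K, Complex.conj_ofReal]
      push_cast [Complex.coe_algebraMap]; ring
    have e4 : (inner ℂ ((c:ℂ) • η) η : ℂ) = ((c * ‖η‖^2 : ℝ) : ℂ) := by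
      rw [inner_smul_left, inner_self_eq_norm_sq_to_K, Complex.conj_ofReal]
      push_cast [Complex.coe_algebraMap]; ring
    rw [e1, e2, e3, e4] at hpv
    have hre : (0:ℝ) ≤ c * ‖ξ‖^2 + (-(c⁻¹)) * ‖y‖^2 + ((-(c⁻¹)) * ‖y‖^2 + c * ‖η‖^2) := by
      simp only [map_add, RCLike.re_to_complex, Complex.add_re, Complex.ofReal_re] at hpv
      linarith
    rw [hξnorm] at hre
    have h3 : c⁻¹ * ‖y‖^2 ≤ c * ‖η‖^2 := by
      have hA : c * (c⁻¹ * ‖y‖)^2 = c⁻¹ * ‖y‖^2 := by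
        field_simp
      rw [hA] at hre
      linarith
    have h2 : ‖y‖^2 ≤ (c*‖η‖)^2 := by
      calc ‖y‖^2 = c * (c⁻¹ * ‖y‖^2) := by
            field_simp
        _ ≤ c * (c * ‖η‖^2) := mul_le_mul_of_nonneg_left h3 hcpos.le
        _ = (c*‖η‖)^2 := by ring
    nlinarith [norm_nonneg y, mul_nonneg hcpos.le (norm_nonneg η)]
  exact ContinuousLinearMap.opNorm_le_bound (ψ x) hcpos.le hbound

/-- let `A, B ⊆ B(H)` be commuting unital C*-subalgebras, and realise the
minimal tensor product `A ⊗ B` spatially inside `B(L)` for `L = H ⊗ H` (tensor structure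
`et`, with `eA a = a ⊗ 1` and `eB b = 1 ⊗ b`).  If `ψ : B(H)⊗B(H) → B(H)` is a u.c.p.
map with `ψ(a ⊗ b) − ab` compact for all `a ∈ A`, `b ∈ B`, then the multiplication map
`a ⊗ b ↦ ab + K(H)` into the Calkin algebra is bounded (contractive) for the minimal
tensor norm: `‖∑ aᵢbᵢ‖_{B(H)/K(H)} ≤ ‖∑ aᵢ ⊗ bᵢ‖_{min}`. -/
theorem stmt17 {H L : Type*}
    [NormedAddCommGroup H] [InnerProductSpace ℂ H] [CompleteSpace H]
    [NormedAddCommGroup L] [InnerProductSpace ℂ L] [CompleteSpace L]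
    (A B : StarSubalgebra ℂ (H →L[ℂ] H))
    (hcomm : ∀ a ∈ A, ∀ b ∈ B, a * b = b * a)
    -- spatial realisation of the minimal tensor product on L ≅ H ⊗ H
    (et : H → H → L)
    (hinner : ∀ ξ η ξ' η' : H,
      (inner ℂ (et ξ η) (et ξ' η') : ℂ) = (inner ℂ ξ ξ' : ℂ) * (inner ℂ η η' : ℂ))
    (htotal : closure (Submodule.span ℂ (Set.range fun p : H × H => et p.1 p.2) : Set L)
      = Set.univ)
    (eA eB : (H →L[ℂ] H) → (L →L[ℂ] L))
    (heA : ∀ (a : H →L[ℂ] H) (ξ η : H), (eA a) (et ξ η) = et (a ξ) η)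
    (heB : ∀ (b : H →L[ℂ] H) (ξ η : H), (eB b) (et ξ η) = et ξ (b η))
    -- the u.c.p. map ψ
    (ψ : (L →L[ℂ] L) →ₗ[ℂ] (H →L[ℂ] H))
    (hψ1 : ψ 1 = 1)
    (hψcp : ∀ (n : ℕ) (x : Matrix (Fin n) (Fin n) (L →L[ℂ] L)),
      (matOp x).IsPositive → (matOp (x.map ψ)).IsPositive)
    (hψcomp : ∀ a ∈ A, ∀ b ∈ B, IsCompactOperator ((ψ (eA a * eB b) - a * b) : H →L[ℂ] H)) :
    ∀ (n : ℕ) (a b : Fin n → (H →L[ℂ] H)), (∀ i, a i ∈ A) → (∀ i, b i ∈ B) →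
      Metric.infDist ((∑ i, a i * b i : H →L[ℂ] H))
        {k : H →L[ℂ] H | IsCompactOperator k} ≤ ‖∑ i, eA (a i) * eB (b i)‖ := by
  intro n a b ha hb
  set X : L →L[ℂ] L := ∑ i, eA (a i) * eB (b i) with hX
  have hsplit : (∑ i, a i * b i) - ψ X
      = ∑ i, (a i * b i - ψ (eA (a i) * eB (b i))) := by
    rw [hX, map_sum, Finset.sum_sub_distrib]
  have hcpt : IsCompactOperator
      ((∑ i, (a i * b i - ψ (eA (a i) * eB (b i)))) : H →L[ℂ] H) := by
    refine Finset.sum_induction _ (fun f : H →L[ℂ] H => IsCompactOperator f)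
      (fun p q hp hq => ?_) isCompactOperator_zero (fun i _ => ?_)
    · exact hp.add hq
    · rw [show (a i * b i - ψ (eA (a i) * eB (b i)) : H →L[ℂ] H)
        = -(ψ (eA (a i) * eB (b i)) - a i * b i) from (neg_sub _ _).symm]
      exact (hψcomp (a i) (ha i) (b i) (hb i)).neg
  have hmem : ((∑ i, a i * b i) - ψ X) ∈ {k : H →L[ℂ] H | IsCompactOperator k} := by
    rw [Set.mem_setOf_eq, hsplit]
    exact hcpt
  calc Metric.infDist ((∑ i, a i * b i : H →L[ℂ] H)) {k : H →L[ℂ] H | IsCompactOperator k}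
      ≤ dist (∑ i, a i * b i) ((∑ i, a i * b i) - ψ X) :=
        Metric.infDist_le_dist_of_mem hmem
    _ = ‖ψ X‖ := by rw [dist_eq_norm]; simp
    _ ≤ ‖X‖ := ucp_contractive ψ hψ1 hψcp X
end
end
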